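/- arXiv:2507.14370 — 3 statements merged into one kernel-verified Lean document; each statement's English description precedes it below -/
import Mathlib

section
/- If two n-qubit permutation matrices P₁ and P₂ satisfy P₁ = G_L P₂ G_R for generalized permutation (monomial) matrices G_L, G_R in the Clifford group, then there exist permutation matrices A_L, A_R in the Clifford group (i.e., affine permutations) such that P₁ = A_L P₂ A_R. In other words, equivalence under Clifford monomial matrices coincides with affine equivalence for permutation matrices. -/
/-- Basis states of `n` qubits. -/
abbrev QState (n : ℕ) := Fin n → ZMod 2

/-- `2^n × 2^n` complex matrices, indexed by basis states of `n` qubits. -/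
abbrev QMat (n : ℕ) := Matrix (QState n) (QState n) ℂ

noncomputable section

namespace CHPaper

/-- Pauli X string: the permutation matrix adding the vector `v` (bit flips). -/
def XStr {n : ℕ} (v : QState n) : QMat n :=
  Matrix.of fun x y => if x = y + v then (1 : ℂ) else 0

/-- Pauli Z string: diagonal sign matrix determined by the vector `v`. -/
def ZStr {n : ℕ} (v : QState n) : QMat n :=
  Matrix.diagonal fun x => (-1 : ℂ) ^ (ZMod.val (∑ i, v i * x i))

/-- The `n`-qubit Pauli group (with phases that are fourth roots of unity). -/
def Pauli (n : ℕ) : Set (QMat n) :=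
  {M | ∃ (c : ℂ) (v w : QState n), c ^ 4 = 1 ∧ M = c • (XStr v * ZStr w)}

/-- The Clifford Hierarchy: level 1 is the Pauli group, and
`U ∈ CH n (k+1)` iff `U` is unitary and conjugates every Pauli into `CH n k`. -/
def CH (n : ℕ) : ℕ → Set (QMat n)
  | 0 => {1}
  | 1 => Pauli n
  | (k+2) => {U | U ∈ Matrix.unitaryGroup (QState n) ℂ ∧
      ∀ P ∈ Pauli n, U * P * star U ∈ CH n (k+1)}

/-- Membership in some finite level of the Clifford Hierarchy. -/
def InCH {n : ℕ} (M : QMat n) : Prop := ∃ k, M ∈ CH n k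

/-- The permutation matrix of a permutation of basis states. -/
def permMat {n : ℕ} (σ : Equiv.Perm (QState n)) : QMat n :=
  Matrix.of fun x y => if x = σ y then (1 : ℂ) else 0

/-- A matrix is a permutation matrix. -/
def IsPermMat {n : ℕ} (M : QMat n) : Prop :=
  ∃ σ : Equiv.Perm (QState n), M = permMat σ

/-- A monomial (generalized permutation) matrix: exactly one nonzero entry in
each row and column. -/
def IsMonomial {n : ℕ} (M : QMat n) : Prop :=
  ∃ (σ : Equiv.Perm (QState n)) (d : QState n → ℂ), (∀ x, d x ≠ 0) ∧
    M = Matrix.of fun x y => if x = σ y then d y else 0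

lemma CH_two (n : ℕ) : CH n 2 = {U : QMat n | U ∈ Matrix.unitaryGroup (QState n) ℂ ∧
      ∀ P ∈ Pauli n, U * P * star U ∈ Pauli n} := rfl

lemma permMat_mul {n} (σ τ : Equiv.Perm (QState n)) :
    permMat σ * permMat τ = permMat (σ * τ) := by
  ext x y
  simp [permMat, Matrix.mul_apply, Finset.sum_ite_eq, eq_comm]
  congr

lemma permMat_one {n} : permMat (1 : Equiv.Perm (QState n)) = 1 := by
  ext x y
  simp [permMat, Matrix.one_apply]
  congr

lemma star_permMat {n} (σ : Equiv.Perm (QState n)) :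
    star (permMat σ) = permMat σ⁻¹ := by
  ext x y
  simp only [permMat, Matrix.star_apply, Matrix.of_apply]
  by_cases h : x = σ⁻¹ y
  · rw [if_pos h, if_pos, star_one]
    rw [h]; simp
  · rw [if_neg h, if_neg, star_zero]
    intro hy; exact h (by rw [hy]; simp)

lemma diagonal_mul_permMat {n} (σ : Equiv.Perm (QState n)) (d : QState n → ℂ) :
    Matrix.diagonal d * permMat σ = permMat σ * Matrix.diagonal (d ∘ σ) := by
  ext x y
  by_cases h : x = σ y <;>
    simp [Matrix.diagonal_mul, Matrix.mul_diagonal, permMat, h]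

lemma monomial_form {n} (σ : Equiv.Perm (QState n)) (d : QState n → ℂ) :
    (Matrix.of fun x y => if x = σ y then d y else 0) = permMat σ * Matrix.diagonal d := by
  ext x y
  simp [permMat, Matrix.mul_diagonal, ite_mul]

lemma XStr_eq {n} (v : QState n) : XStr v = permMat (Equiv.addRight v) := rfl

lemma smul_diagonal {n} (c : ℂ) (d : QState n → ℂ) :
    c • Matrix.diagonal d = Matrix.diagonal fun y => c * d y := by
  ext x y
  by_cases h : x = y <;> simp [Matrix.diagonal, h]

lemma perm_diag_eq {n} {σ τ : Equiv.Perm (QState n)} {e f : QState n → ℂ}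
    (he : ∀ y, e y ≠ 0)
    (h : permMat σ * Matrix.diagonal e = permMat τ * Matrix.diagonal f) :
    σ = τ := by
  apply Equiv.ext; intro y
  have := congrFun (congrFun h (σ y)) y
  simp [permMat, Matrix.mul_diagonal] at this
  by_contra hne
  rw [if_neg hne] at this
  exact he y this

/-- product of monomial matrices in normal form -/
lemma mono_mul {n} (σ τ : Equiv.Perm (QState n)) (d e : QState n → ℂ) :
    (permMat σ * Matrix.diagonal d) * (permMat τ * Matrix.diagonal e)
      = permMat (σ * τ) * Matrix.diagonal (fun y => d (τ y) * e y) := by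
  rw [mul_assoc, ← mul_assoc (Matrix.diagonal d), diagonal_mul_permMat, mul_assoc,
    Matrix.diagonal_mul_diagonal, ← mul_assoc, permMat_mul]
  rfl

lemma star_mono {n} (σ : Equiv.Perm (QState n)) (d : QState n → ℂ) :
    star (permMat σ * Matrix.diagonal d)
      = permMat σ⁻¹ * Matrix.diagonal (fun y => star (d (σ⁻¹ y))) := by
  rw [star_mul, star_permMat, Matrix.star_eq_conjTranspose, Matrix.diagonal_conjTranspose,
    diagonal_mul_permMat]
  rfl

/-- the diagonal sign function of a Z string -/
def zfun {n : ℕ} (w : QState n) : QState n → ℂ :=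
  fun x => (-1 : ℂ) ^ (ZMod.val (∑ i, w i * x i))

lemma zfun_ne_zero {n} (w : QState n) (x : QState n) : zfun w x ≠ 0 := by
  simp [zfun]

lemma ZStr_eq {n} (w : QState n) :
    ZStr w = permMat 1 * Matrix.diagonal (zfun w) := by
  rw [permMat_one, one_mul]; rfl

lemma pauli_form {n} (c : ℂ) (v w : QState n) :
    c • (XStr v * ZStr w)
      = permMat (Equiv.addRight v) * Matrix.diagonal (fun y => c * zfun w y) := by
  rw [XStr_eq, ZStr_eq, permMat_one, one_mul, ← mul_smul_comm, smul_diagonal]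

lemma XStr_mem_Pauli {n} (v : QState n) : XStr v ∈ Pauli n := by
  refine ⟨1, v, 0, by norm_num, ?_⟩
  rw [one_smul]
  have : ZStr (0 : QState n) = 1 := by
    have : (fun x : QState n => (-1 : ℂ) ^ (ZMod.val (∑ i, (0 : QState n) i * x i)))
        = fun _ => 1 := by
      funext x; simp
    rw [ZStr, this, Matrix.diagonal_one]
  rw [this, mul_one]

lemma ZStr_mem_Pauli {n} (w : QState n) : ZStr w ∈ Pauli n := by
  refine ⟨1, 0, w, by norm_num, ?_⟩
  rw [one_smul]
  have : XStr (0 : QState n) = 1 := by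
    rw [XStr_eq]
    have : Equiv.addRight (0 : QState n) = 1 := by
      apply Equiv.ext; intro y; simp
    rw [this, permMat_one]
  rw [this, one_mul]


lemma c_ne_zero {c : ℂ} (hc : c ^ 4 = 1) : c ≠ 0 := by
  intro h; rw [h] at hc; norm_num at hc

lemma diagonal_one' {n : ℕ} : Matrix.diagonal (fun _ : QState n => (1 : ℂ)) = 1 :=
  Matrix.diagonal_one

lemma XZ_mono {n} (v w : QState n) :
    XStr v * ZStr w = permMat (Equiv.addRight v) * Matrix.diagonal (zfun w) := by
  rw [XStr_eq, ZStr_eq, permMat_one, one_mul]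

lemma XStr_mul {n} (a b : QState n) : XStr a * XStr b = XStr (b + a) := by
  rw [XStr_eq, XStr_eq, XStr_eq, permMat_mul]
  have : Equiv.addRight a * Equiv.addRight b = Equiv.addRight (b + a) := by
    apply Equiv.ext; intro y
    simp [add_assoc]
  rw [this]

/-- conjugation of a monomial matrix by a monomial matrix, in normal form -/
lemma mono_conj {n} (σ τ : Equiv.Perm (QState n)) (d e : QState n → ℂ) :
    (permMat σ * Matrix.diagonal d) * (permMat τ * Matrix.diagonal e) *
      star (permMat σ * Matrix.diagonal d)
    = permMat (σ * τ * σ⁻¹) *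
        Matrix.diagonal (fun y => d (τ (σ⁻¹ y)) * e (σ⁻¹ y) * star (d (σ⁻¹ y))) := by
  rw [star_mono, mono_mul, mono_mul]

/-- Key lemma: the permutation part of a Clifford monomial matrix is Clifford. -/
lemma perm_part_CH2 {n} (σ : Equiv.Perm (QState n)) (d : QState n → ℂ)
    (hd : ∀ x, d x ≠ 0)
    (hC : permMat σ * Matrix.diagonal d ∈ CH n 2) :
    permMat σ ∈ CH n 2 := by
  rw [CH_two] at hC ⊢
  obtain ⟨hU, hPau⟩ := hC
  set P : QMat n := permMat σ with hPdef
  set G : QMat n := permMat σ * Matrix.diagonal d with hG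
  have hPP : star P * P = 1 := by
    rw [hPdef, star_permMat, permMat_mul, inv_mul_cancel, permMat_one]
  have hPP' : P * star P = 1 := by
    rw [hPdef, star_permMat, permMat_mul, mul_inv_cancel, permMat_one]
  -- unitarity gives |d| = 1 pointwise
  have hdd : ∀ y, star (d y) * d y = 1 := by
    intro y
    have h1 : star G * G = 1 := hU.1
    rw [hG, star_mono, mono_mul] at h1
    have := congrFun (congrFun h1 y) y
    rw [Matrix.mul_apply] at this
    simpa [permMat, Matrix.diagonal_apply_eq, Matrix.one_apply,
      Finset.sum_ite_eq] using this
  -- conjugation of X strings by the permutation part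
  have hX : ∀ v : QState n, ∃ a : QState n,
      σ * Equiv.addRight v * σ⁻¹ = Equiv.addRight a := by
    intro v
    obtain ⟨c, a, b, hc, hform⟩ := hPau (XStr v) (XStr_mem_Pauli v)
    refine ⟨a, ?_⟩
    rw [pauli_form, hG] at hform
    rw [show XStr v = permMat (Equiv.addRight v) * Matrix.diagonal (fun _ => (1:ℂ)) by
      rw [diagonal_one', mul_one, XStr_eq]] at hform
    rw [mono_conj] at hform
    exact perm_diag_eq (fun y => by
      exact mul_ne_zero (mul_ne_zero (hd _) one_ne_zero) (star_ne_zero.2 (hd _))) hform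
  -- conjugation of Z strings
  have hZ : ∀ w : QState n, P * ZStr w * star P ∈ Pauli n := by
    intro w
    have key : P * ZStr w * star P = G * ZStr w * star G := by
      have L := mono_conj σ 1 (fun _ => (1:ℂ)) (zfun w)
      have R := mono_conj σ 1 d (zfun w)
      rw [diagonal_one', mul_one] at L
      rw [← ZStr_eq] at L R
      have hfun : (fun y => (1:ℂ) * zfun w (σ⁻¹ y) * star 1)
          = fun y => d ((1 : Equiv.Perm (QState n)) (σ⁻¹ y)) * zfun w (σ⁻¹ y)
              * star (d (σ⁻¹ y)) := by
        funext y
        simp only [Equiv.Perm.one_apply, star_one, one_mul, mul_one]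
        linear_combination (-(zfun w (σ⁻¹ y))) * hdd (σ⁻¹ y)
      rw [hPdef, hG, L, hfun, R]
    rw [key]
    exact hPau (ZStr w) (ZStr_mem_Pauli w)
  refine ⟨⟨hPP, hPP'⟩, ?_⟩
  rintro Q ⟨c, v, w, hc, rfl⟩
  obtain ⟨a, ha⟩ := hX v
  have hXa : P * XStr v * star P = XStr a := by
    rw [hPdef, XStr_eq, star_permMat, permMat_mul, permMat_mul, ha, ← XStr_eq]
  obtain ⟨c', v', w', hc', hf'⟩ := hZ w
  have split : P * (XStr v * ZStr w) * star P
      = (P * XStr v * star P) * (P * ZStr w * star P) := by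
    have h2 : ∀ X : QMat n, star P * (P * X) = X := fun X => by
      rw [← mul_assoc, hPP, one_mul]
    simp only [mul_assoc, h2]
  refine ⟨c * c', v' + a, w', by rw [mul_pow, hc, hc', one_mul], ?_⟩
  rw [mul_smul_comm, smul_mul_assoc, split, hXa, hf']
  rw [mul_smul_comm, smul_smul, ← mul_assoc, XStr_mul]



/-- If two permutation matrices are related by left/right
multiplication by Clifford monomial matrices, then they are related by
left/right multiplication by Clifford permutation matrices (affine
permutations). -/
theorem clifford_monomial_equiv_implies_affine_equiv {n : ℕ}
    (P₁ P₂ G_L G_R : QMat n)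
    (hP₁ : IsPermMat P₁) (hP₂ : IsPermMat P₂)
    (hGL : IsMonomial G_L) (hGLC : G_L ∈ CH n 2)
    (hGR : IsMonomial G_R) (hGRC : G_R ∈ CH n 2)
    (heq : P₁ = G_L * P₂ * G_R) :
    ∃ A_L A_R : QMat n,
      IsPermMat A_L ∧ A_L ∈ CH n 2 ∧ IsPermMat A_R ∧ A_R ∈ CH n 2 ∧
      P₁ = A_L * P₂ * A_R := by
  obtain ⟨σ₁, rfl⟩ := hP₁
  obtain ⟨σ₂, rfl⟩ := hP₂
  obtain ⟨σL, dL, hdL, rfl⟩ := hGL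
  obtain ⟨σR, dR, hdR, rfl⟩ := hGR
  rw [monomial_form σL dL] at hGLC heq
  rw [monomial_form σR dR] at hGRC heq
  refine ⟨permMat σL, permMat σR, ⟨σL, rfl⟩, perm_part_CH2 σL dL hdL hGLC,
    ⟨σR, rfl⟩, perm_part_CH2 σR dR hdR hGRC, ?_⟩
  have heq' : permMat σ₁ * Matrix.diagonal (fun _ : QState n => (1:ℂ))
      = permMat (σL * σ₂ * σR) *
          Matrix.diagonal (fun y => dL (σ₂ (σR y)) * 1 * dR y) := by
    rw [diagonal_one', mul_one, heq]
    rw [show permMat σ₂ = permMat σ₂ * Matrix.diagonal (fun _ : QState n => (1:ℂ)) by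
      rw [diagonal_one', mul_one]]
    rw [mono_mul, mono_mul]
  have key : σ₁ = σL * σ₂ * σR :=
    perm_diag_eq (fun y => one_ne_zero) heq'
  rw [permMat_mul, permMat_mul, ← key]
end CHPaper
end
end

section
/- The order of the group 𝒟ₖⁿ of n-qubit diagonal gates at level k of the Clifford Hierarchy equals ∏_{j=0}^{min(k-1,n-1)} (2^{k-j})^{C(n, j+1)}, where C(n,m) is the binomial coefficient. -/
noncomputable section

namespace CHPaper

/-- The multi-controlled phase gate Λ^{|S|-1}(Z^{1/2^l}): applies the phase
exp(iπ/2^l) to basis states that are 1 on every qubit in S. -/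
def MCphase {n : ℕ} (S : Finset (Fin n)) (l : ℕ) : QMat n :=
  Matrix.diagonal fun x =>
    if ∀ i ∈ S, x i = 1 then
      Complex.exp (Complex.I * (Real.pi : ℂ) / 2 ^ l) else 1

/-- Generating set of 𝒟ₖⁿ: multi-controlled phase gates Λ^m(Z^{1/2^l}) with
l + m + 1 = l + |S| ≤ k (such a gate lies in level l + |S| of the Clifford
Hierarchy). -/
def DGen (n k : ℕ) : Set (QMat n) :=
  {M | ∃ (S : Finset (Fin n)) (l : ℕ), S.Nonempty ∧ l + S.card ≤ k ∧
    M = MCphase S l}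

/-- 𝒟ₖⁿ, the group of n-qubit diagonal gates at level k of the Clifford
Hierarchy, generated by the multi-controlled phase gates (all generators have
finite order, so the monoid closure is a group). -/
def DGroup (n k : ℕ) : Set (QMat n) :=
  (Submonoid.closure (DGen n k) : Submonoid (QMat n))
-- AUX
open Finset

def chi {n : ℕ} (S : Finset (Fin n)) (x : QState n) : ℕ :=
  if ∀ i ∈ S, x i = 1 then 1 else 0

def Sgood (n k : ℕ) : Finset (Finset (Fin n)) :=
  Finset.univ.filter fun S => S.Nonempty ∧ S.card ≤ k

def zeta (k : ℕ) : ℂ := Complex.exp (2 * (Real.pi : ℂ) * Complex.I / ((2 ^ (k+1) : ℕ) : ℂ))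

def wt (n k : ℕ) (c : Finset (Fin n) → ℕ) (x : QState n) : ℕ :=
  ∑ S ∈ Sgood n k, c S * 2 ^ S.card * chi S x

def Dmat (n k : ℕ) (c : Finset (Fin n) → ℕ) : QMat n :=
  Matrix.diagonal fun x => zeta k ^ wt n k c x

lemma zeta_prim (k : ℕ) : IsPrimitiveRoot (zeta k) (2 ^ (k+1)) := by
  have := Complex.isPrimitiveRoot_exp (2 ^ (k+1)) (by positivity)
  simpa [zeta] using this

lemma zeta_pow_card (k : ℕ) : zeta k ^ (2 ^ (k+1)) = 1 := (zeta_prim k).pow_eq_one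

lemma zeta_pow_mod (k a : ℕ) : zeta k ^ a = zeta k ^ (a % 2 ^ (k+1)) := by
  conv_lhs => rw [← Nat.div_add_mod a (2 ^ (k+1))]
  rw [pow_add, pow_mul, zeta_pow_card, one_pow, one_mul]

lemma zeta_pow_congr {k a b : ℕ} (h : a ≡ b [MOD 2 ^ (k+1)]) : zeta k ^ a = zeta k ^ b := by
  rw [zeta_pow_mod k a, zeta_pow_mod k b]
  exact congrArg _ h

lemma zeta_pow_exp {k l : ℕ} (hl : l ≤ k) :
    zeta k ^ (2 ^ (k - l)) = Complex.exp (Complex.I * (Real.pi : ℂ) / 2 ^ l) := by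
  rw [zeta, ← Complex.exp_nat_mul]
  congr 1
  have h2 : ((2 : ℂ) ^ (k+1)) ≠ 0 := pow_ne_zero _ two_ne_zero
  have hl2 : ((2 : ℂ) ^ l) ≠ 0 := pow_ne_zero _ two_ne_zero
  have key : (2 : ℂ) ^ (k - l) * 2 ^ l * 2 = 2 ^ (k+1) := by
    rw [← pow_add, ← pow_succ]
    congr 1
    omega
  push_cast
  field_simp
  linear_combination key


def sing {n : ℕ} (S₀ : Finset (Fin n)) (m : ℕ) : Finset (Fin n) → ℕ :=
  fun T => if T = S₀ then m else 0

lemma wt_sing {n k : ℕ} {S₀ : Finset (Fin n)} (hS : S₀ ∈ Sgood n k) (m : ℕ) (x : QState n) :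
    wt n k (sing S₀ m) x = m * 2 ^ S₀.card * chi S₀ x := by
  rw [wt, Finset.sum_eq_single_of_mem S₀ hS]
  · simp [sing]
  · intro T _ hT
    simp [sing, hT]

lemma wt_add {n k : ℕ} (c d : Finset (Fin n) → ℕ) (x : QState n) :
    wt n k (c + d) x = wt n k c x + wt n k d x := by
  simp only [wt, Pi.add_apply, add_mul, Finset.sum_add_distrib]

lemma Dmat_add {n k : ℕ} (c d : Finset (Fin n) → ℕ) :
    Dmat n k (c + d) = Dmat n k c * Dmat n k d := by
  rw [Dmat, Dmat, Dmat, Matrix.diagonal_mul_diagonal]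
  refine congrArg Matrix.diagonal (funext fun x => ?_)
  rw [wt_add, pow_add]

lemma Dmat_zero {n k : ℕ} : Dmat n k (fun _ => 0) = 1 := by
  rw [Dmat]
  have : (fun x : QState n => zeta k ^ wt n k (fun _ => 0) x) = fun _ => 1 := by
    funext x
    simp [wt]
  rw [this, Matrix.diagonal_one]

lemma Dmat_ext {n k : ℕ} {c d : Finset (Fin n) → ℕ}
    (h : ∀ S ∈ Sgood n k, c S = d S) : Dmat n k c = Dmat n k d := by
  rw [Dmat, Dmat]
  refine congrArg Matrix.diagonal (funext fun x => congrArg _ ?_)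
  exact Finset.sum_congr rfl fun S hS => by rw [h S hS]

lemma Dmat_pow {n k : ℕ} (c : Finset (Fin n) → ℕ) (m : ℕ) :
    Dmat n k c ^ m = Dmat n k (fun T => m * c T) := by
  induction m with
  | zero => simpa using Dmat_zero.symm
  | succ m ih =>
      rw [pow_succ, ih, ← Dmat_add]
      exact congrArg (Dmat n k) (funext fun T => by simp [Pi.add_apply, Nat.succ_mul])

lemma MCphase_eq {n k : ℕ} {S : Finset (Fin n)} {l : ℕ} (hS : S ∈ Sgood n k)
    (hl : l + S.card ≤ k) :
    MCphase S l = Dmat n k (sing S (2 ^ (k - l - S.card))) := by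
  rw [MCphase, Dmat]
  refine congrArg Matrix.diagonal (funext fun x => ?_)
  rw [wt_sing hS]
  by_cases hx : ∀ i ∈ S, x i = 1
  · rw [if_pos hx, chi, if_pos hx, mul_one, ← pow_add]
    rw [show k - l - S.card + S.card = k - l by omega]
    exact (zeta_pow_exp (by omega)).symm
  · rw [if_neg hx, chi, if_neg hx, mul_zero, pow_zero]


lemma Dmat_mem_closure {n k : ℕ} (c : Finset (Fin n) → ℕ) :
    Dmat n k c ∈ Submonoid.closure (DGen n k) := by
  have main : ∀ T : Finset (Finset (Fin n)), T ⊆ Sgood n k →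
      Dmat n k (fun S => if S ∈ T then c S else 0) ∈ Submonoid.closure (DGen n k) := by
    intro T
    induction T using Finset.induction_on with
    | empty =>
        intro _
        have : (fun S : Finset (Fin n) => if S ∈ (∅ : Finset (Finset (Fin n))) then c S else 0)
            = fun _ => 0 := by
          funext S; simp
        rw [this, Dmat_zero]
        exact one_mem _
    | @insert a T ha ih =>
        intro hsub
        have haS : a ∈ Sgood n k := hsub (Finset.mem_insert_self a T)
        have hsplit : (fun S => if S ∈ insert a T then c S else 0)
            = sing a (c a) + (fun S => if S ∈ T then c S else 0) := by
          funext S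
          by_cases h1 : S = a
          · subst h1
            simp [sing, ha]
          · simp [sing, h1, Finset.mem_insert]
        rw [hsplit, Dmat_add]
        refine mul_mem ?_ (ih fun S hS => hsub (Finset.mem_insert_of_mem hS))
        -- Dmat n k (sing a (c a)) ∈ closure
        have hcard : a.card ≤ k := by
          have := (Finset.mem_filter.mp haS).2
          exact this.2
        have hgenmem : MCphase a (k - a.card) ∈ DGen n k :=
          ⟨a, k - a.card, (Finset.mem_filter.mp haS).2.1, by omega, rfl⟩
        have hone : MCphase a (k - a.card) = Dmat n k (sing a 1) := by
          rw [MCphase_eq haS (by omega)]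
          funext T'
          simp [sing, show k - (k - a.card) - a.card = 0 by omega]
        have hpow : Dmat n k (sing a (c a)) = (MCphase a (k - a.card)) ^ (c a) := by
          rw [hone, Dmat_pow]
          exact congrArg (Dmat n k) (funext fun T' => by
            by_cases h : T' = a <;> simp [sing, h])
        rw [hpow]
        exact pow_mem (Submonoid.subset_closure hgenmem) _
  have := main (Sgood n k) le_rfl
  have heq : Dmat n k (fun S => if S ∈ Sgood n k then c S else 0) = Dmat n k c :=
    Dmat_ext fun S hS => by rw [if_pos hS]
  rwa [heq] at this

lemma DGroup_eq_range (n k : ℕ) : DGroup n k = Set.range (Dmat n k) := by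
  apply Set.Subset.antisymm
  · intro M hM
    have hM' : M ∈ Submonoid.closure (DGen n k) := hM
    refine Submonoid.closure_induction (motive := fun x _ => x ∈ Set.range (Dmat n k))
      ?_ ?_ ?_ hM'
    · rintro x ⟨S, l, hSne, hlk, rfl⟩
      have hS : S ∈ Sgood n k := Finset.mem_filter.mpr ⟨Finset.mem_univ _, hSne, by omega⟩
      exact ⟨sing S (2 ^ (k - l - S.card)), (MCphase_eq hS hlk).symm⟩
    · exact ⟨fun _ => 0, Dmat_zero⟩
    · rintro x y hx hy ⟨c, rfl⟩ ⟨d, rfl⟩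
      exact ⟨c + d, Dmat_add c d⟩
  · rintro M ⟨c, rfl⟩
    exact Dmat_mem_closure c


def eFun {n k : ℕ} (t : ∀ S : {S // S ∈ Sgood n k}, Fin (2 ^ (k + 1 - S.1.card))) :
    Finset (Fin n) → ℕ :=
  fun S => if h : S ∈ Sgood n k then (t ⟨S, h⟩ : ℕ) else 0

lemma card_le_of_good {n k : ℕ} {S : Finset (Fin n)} (h : S ∈ Sgood n k) : S.card ≤ k :=
  (Finset.mem_filter.mp h).2.2

lemma eFun_lt {n k : ℕ} (t : ∀ S : {S // S ∈ Sgood n k}, Fin (2 ^ (k + 1 - S.1.card)))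
    {S : Finset (Fin n)} (h : S ∈ Sgood n k) : eFun t S < 2 ^ (k + 1 - S.card) := by
  rw [eFun, dif_pos h]
  exact (t ⟨S, h⟩).2

lemma modeq_sum {N : ℕ} {ι : Type*} {s : Finset ι} {f g : ι → ℕ}
    (h : ∀ i ∈ s, f i ≡ g i [MOD N]) : (∑ i ∈ s, f i) ≡ ∑ i ∈ s, g i [MOD N] := by
  unfold Nat.ModEq
  rw [Finset.sum_nat_mod s N f, Finset.sum_nat_mod s N g]
  congr 1
  exact Finset.sum_congr rfl h

lemma Dmat_eq_of_modeq {n k : ℕ} {c d : Finset (Fin n) → ℕ}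
    (h : ∀ x, wt n k c x ≡ wt n k d x [MOD 2 ^ (k+1)]) : Dmat n k c = Dmat n k d := by
  rw [Dmat, Dmat]
  exact congrArg Matrix.diagonal (funext fun x => zeta_pow_congr (h x))

lemma range_Dmat_eq {n k : ℕ} :
    Set.range (Dmat n k) = Set.range (fun t : ∀ S : {S // S ∈ Sgood n k},
      Fin (2 ^ (k + 1 - S.1.card)) => Dmat n k (eFun t)) := by
  apply Set.Subset.antisymm
  · rintro M ⟨c, rfl⟩
    refine ⟨fun S => ⟨c S.1 % 2 ^ (k + 1 - S.1.card), Nat.mod_lt _ (Nat.pow_pos (by norm_num))⟩, ?_⟩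
    refine (Dmat_eq_of_modeq fun x => ?_).symm
    refine modeq_sum fun S hS => ?_
    have hcard : S.card ≤ k := card_le_of_good hS
    have he : eFun (fun S => (⟨c S.1 % 2 ^ (k + 1 - S.1.card), Nat.mod_lt _ (Nat.pow_pos (by norm_num))⟩ : Fin _)) S = c S % 2 ^ (k + 1 - S.card) := by
      rw [eFun, dif_pos hS]
    rw [he]
    have h1 : (c S % 2 ^ (k + 1 - S.card)) * 2 ^ S.card ≡ c S * 2 ^ S.card
        [MOD 2 ^ (k + 1 - S.card) * 2 ^ S.card] :=
      (Nat.mod_modEq (c S) _).mul_right' _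
    rw [← pow_add, show k + 1 - S.card + S.card = k + 1 by omega] at h1
    exact (h1.mul_right _).symm
  · rintro M ⟨t, rfl⟩
    exact ⟨eFun t, rfl⟩


lemma chi_indicator {n : ℕ} (S T : Finset (Fin n)) :
    chi T (fun i => if i ∈ S then (1 : ZMod 2) else 0) = if T ⊆ S then 1 else 0 := by
  rw [chi]
  have hiff : (∀ i ∈ T, (if i ∈ S then (1 : ZMod 2) else 0) = 1) ↔ T ⊆ S := by
    constructor
    · intro h i hi
      by_contra hS
      have := h i hi
      rw [if_neg hS] at this
      exact absurd this (by decide)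
    · intro h i hi
      rw [if_pos (h hi)]
  exact if_congr hiff rfl rfl

lemma Dmat_eFun_injective {n k : ℕ} :
    Function.Injective (fun t : ∀ S : {S // S ∈ Sgood n k},
      Fin (2 ^ (k + 1 - S.1.card)) => Dmat n k (eFun t)) := by
  intro t t' hD
  simp only [Dmat] at hD
  have hfn := Matrix.diagonal_injective hD
  have hw : ∀ x : QState n, wt n k (eFun t) x ≡ wt n k (eFun t') x [MOD 2 ^ (k+1)] := by
    intro x
    have hx := congrFun hfn x
    rw [zeta_pow_mod k (wt n k (eFun t) x), zeta_pow_mod k (wt n k (eFun t') x)] at hx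
    exact (zeta_prim k).pow_inj (Nat.mod_lt _ (by positivity)) (Nat.mod_lt _ (by positivity)) hx
  have key : ∀ m, ∀ S : Finset (Fin n), S.card ≤ m → eFun t S = eFun t' S := by
    intro m
    induction m with
    | zero =>
        intro S hS
        have hSe : S = ∅ := Finset.card_eq_zero.mp (Nat.le_zero.mp hS)
        subst hSe
        have hnot : (∅ : Finset (Fin n)) ∉ Sgood n k := by
          simp [Sgood]
        rw [eFun, eFun, dif_neg hnot, dif_neg hnot]
    | succ m ih =>
        intro S hS
        by_cases hmem : S ∈ Sgood n k
        · rcases Nat.lt_or_ge S.card (m+1) with h | h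
          · exact ih S (by omega)
          have hcardk : S.card ≤ k := card_le_of_good hmem
          set x : QState n := fun i => if i ∈ S then (1 : ZMod 2) else 0 with hxdef
          have hSfil : S ∈ (Sgood n k).filter (· ⊆ S) :=
            Finset.mem_filter.mpr ⟨hmem, Finset.Subset.refl S⟩
          have hsplit : ∀ c : Finset (Fin n) → ℕ, wt n k c x
              = c S * 2 ^ S.card + ∑ T ∈ ((Sgood n k).filter (· ⊆ S)).erase S,
                  c T * 2 ^ T.card := by
            intro c
            rw [wt]
            calc ∑ T ∈ Sgood n k, c T * 2 ^ T.card * chi T x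
                = ∑ T ∈ Sgood n k, (if T ⊆ S then c T * 2 ^ T.card else 0) := by
                  refine Finset.sum_congr rfl fun T _ => ?_
                  rw [hxdef, chi_indicator]
                  split <;> simp
              _ = ∑ T ∈ (Sgood n k).filter (· ⊆ S), c T * 2 ^ T.card :=
                  (Finset.sum_filter _ _).symm
              _ = c S * 2 ^ S.card + ∑ T ∈ ((Sgood n k).filter (· ⊆ S)).erase S,
                  c T * 2 ^ T.card := (Finset.add_sum_erase _ _ hSfil).symm
          have hrest : ∑ T ∈ ((Sgood n k).filter (· ⊆ S)).erase S, eFun t T * 2 ^ T.card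
              = ∑ T ∈ ((Sgood n k).filter (· ⊆ S)).erase S, eFun t' T * 2 ^ T.card := by
            refine Finset.sum_congr rfl fun T hT => ?_
            have hTne := (Finset.mem_erase.mp hT).1
            have hTsub := (Finset.mem_filter.mp (Finset.mem_erase.mp hT).2).2
            have : T ⊂ S := lt_of_le_of_ne hTsub hTne
            have hTcard : T.card < S.card := Finset.card_lt_card this
            rw [ih T (by omega)]
          have h1 := hw x
          rw [hsplit (eFun t), hsplit (eFun t'), hrest] at h1
          have h2 := (h1.add_right_cancel' _)
          have hlt1 : eFun t S * 2 ^ S.card < 2 ^ (k+1) := by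
            calc eFun t S * 2 ^ S.card < 2 ^ (k + 1 - S.card) * 2 ^ S.card :=
              (Nat.mul_lt_mul_right (Nat.pow_pos (by norm_num))).mpr (eFun_lt t hmem)
            _ = 2 ^ (k+1) := by rw [← pow_add]; congr 1; omega
          have hlt2 : eFun t' S * 2 ^ S.card < 2 ^ (k+1) := by
            calc eFun t' S * 2 ^ S.card < 2 ^ (k + 1 - S.card) * 2 ^ S.card :=
              (Nat.mul_lt_mul_right (Nat.pow_pos (by norm_num))).mpr (eFun_lt t' hmem)
            _ = 2 ^ (k+1) := by rw [← pow_add]; congr 1; omega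
          have h3 : eFun t S * 2 ^ S.card = eFun t' S * 2 ^ S.card := by
            have := h2
            unfold Nat.ModEq at this
            rwa [Nat.mod_eq_of_lt hlt1, Nat.mod_eq_of_lt hlt2] at this
          exact Nat.eq_of_mul_eq_mul_right (Nat.pow_pos (by norm_num)) h3
        · rw [eFun, eFun, dif_neg hmem, dif_neg hmem]
  funext S
  have := key S.1.card S.1 le_rfl
  rw [eFun, eFun, dif_pos S.2, dif_pos S.2] at this
  exact Fin.ext (by simpa using this)


lemma prod_Sgood (n k : ℕ) :
    ∏ S ∈ Sgood n k, 2 ^ (k + 1 - S.card)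
      = ∏ j ∈ Finset.range (min k n), (2 ^ (k - j)) ^ (n.choose (j + 1)) := by
  have hmap : ∀ S ∈ Sgood n k, S.card - 1 ∈ Finset.range (min k n) := by
    intro S hS
    have h1 : 1 ≤ S.card := Finset.card_pos.mpr (Finset.mem_filter.mp hS).2.1
    have h2 : S.card ≤ k := (Finset.mem_filter.mp hS).2.2
    have h3 : S.card ≤ n := by
      have := Finset.card_le_univ S
      simpa [Finset.card_fin] using this
    rw [Finset.mem_range]
    omega
  rw [← Finset.prod_fiberwise_of_maps_to hmap (fun S => 2 ^ (k + 1 - S.card))]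
  refine Finset.prod_congr rfl fun j hj => ?_
  rw [Finset.mem_range] at hj
  have hfil : (Sgood n k).filter (fun S => S.card - 1 = j)
      = Finset.powersetCard (j + 1) Finset.univ := by
    ext S
    simp only [Finset.mem_filter, Sgood, Finset.mem_univ, true_and,
      Finset.mem_powersetCard_univ]
    constructor
    · rintro ⟨⟨hne, hle⟩, hcard⟩
      have := Finset.card_pos.mpr hne
      omega
    · intro hcard
      exact ⟨⟨Finset.card_pos.mp (by omega), by omega⟩, by omega⟩
  rw [hfil]
  have hconst : ∀ S ∈ Finset.powersetCard (j + 1) (Finset.univ : Finset (Fin n)),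
      2 ^ (k + 1 - S.card) = 2 ^ (k - j) := by
    intro S hS
    rw [Finset.mem_powersetCard_univ] at hS
    rw [hS]
    congr 1
    omega
  rw [Finset.prod_congr rfl hconst, Finset.prod_const, Finset.card_powersetCard,
    Finset.card_fin]


/-- the order of 𝒟ₖⁿ equals
∏_{j=0}^{min(k-1,n-1)} (2^{k-j})^{C(n,j+1)}. -/
theorem card_DGroup (n k : ℕ) :
    (DGroup n k).ncard =
      ∏ j ∈ Finset.range (min k n), (2 ^ (k - j)) ^ (n.choose (j + 1)) := by
  rw [DGroup_eq_range, range_Dmat_eq, ← Set.image_univ,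
    Set.ncard_image_of_injective _ Dmat_eFun_injective, Set.ncard_univ,
    Nat.card_eq_fintype_card, Fintype.card_pi, ← prod_Sgood n k,
    ← Finset.prod_coe_sort (Sgood n k) (fun S => 2 ^ (k + 1 - S.card))]
  exact Finset.prod_congr rfl fun S _ => Fintype.card_fin _
end CHPaper
end
end

section
/- For every k, there are only finitely many affine equivalence classes of permutations of F₂ᵐ whose non-fixed points form a single cycle of length k, uniformly in m; moreover for m > k, every such permutation is affine-equivalent to a gate obtained by adding controls to a representative from a fixed finite set 𝒜ₖ of permutations determined by r × k binary matrices with r ≤ k. -/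
/-- Basis states of m qubits. -/
abbrev QS (m : ℕ) := Fin m → ZMod 2

/-- An affine permutation of F₂ᵐ: an invertible linear map plus a translation
(implemented by CNOTs and Pauli X gates). -/
def IsAffinePerm {m : ℕ} (f : Equiv.Perm (QS m)) : Prop :=
  ∃ (L : QS m ≃ₗ[ZMod 2] QS m) (b : QS m), ∀ x, f x = L x + b

/-- Affine equivalence of permutations: p = f * q * g for affine f, g. -/
def AffEquiv {m : ℕ} (p q : Equiv.Perm (QS m)) : Prop :=
  ∃ f g : Equiv.Perm (QS m), IsAffinePerm f ∧ IsAffinePerm g ∧ p = f * q * g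

namespace FMCC
variable {m : ℕ}

lemma add_self (x : QS m) : x + x = 0 :=
  funext fun i => CharTwo.add_self_eq_zero (x i)

lemma affine_one : IsAffinePerm (1 : Equiv.Perm (QS m)) :=
  ⟨LinearEquiv.refl _ _, 0, fun x => by simp⟩

lemma affEquiv_refl (p : Equiv.Perm (QS m)) : AffEquiv p p :=
  ⟨1, 1, affine_one, affine_one, by simp⟩

lemma affine_inv {f : Equiv.Perm (QS m)} (hf : IsAffinePerm f) : IsAffinePerm f⁻¹ := by
  obtain ⟨L, b, h⟩ := hf
  refine ⟨L.symm, L.symm b, fun x => ?_⟩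
  apply f.injective
  rw [show f (f⁻¹ x) = x from (Equiv.eq_symm_apply f).mp rfl, h, map_add]
  simp [add_assoc, add_self]

lemma affEquiv_conj (p : Equiv.Perm (QS m)) {A : Equiv.Perm (QS m)} (hA : IsAffinePerm A) :
    AffEquiv p (A * p * A⁻¹) :=
  ⟨A⁻¹, A, affine_inv hA, hA, by group⟩

lemma exists_extend (W : Submodule (ZMod 2) (QS m)) (ψ : W →ₗ[ZMod 2] QS m)
    (hψ : Function.Injective ψ) :
    ∃ L : QS m ≃ₗ[ZMod 2] QS m, ∀ w : W, L w = ψ w := by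
  obtain ⟨Wc, hWc⟩ := W.exists_isCompl
  obtain ⟨Rc, hRc⟩ := (LinearMap.range ψ).exists_isCompl
  let e₁ : W ≃ₗ[ZMod 2] LinearMap.range ψ := LinearEquiv.ofInjective ψ hψ
  have hdim : Module.finrank (ZMod 2) Wc = Module.finrank (ZMod 2) Rc := by
    have h1 := Submodule.finrank_add_eq_of_isCompl hWc
    have h2 := Submodule.finrank_add_eq_of_isCompl hRc
    have h3 : Module.finrank (ZMod 2) W = Module.finrank (ZMod 2) (LinearMap.range ψ) :=
      e₁.finrank_eq
    omega
  refine ⟨(Submodule.prodEquivOfIsCompl W Wc hWc).symm.trans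
      ((e₁.prodCongr (LinearEquiv.ofFinrankEq _ _ hdim)).trans
        (Submodule.prodEquivOfIsCompl _ Rc hRc)), fun w => ?_⟩
  simp only [LinearEquiv.trans_apply, Submodule.prodEquivOfIsCompl_symm_apply_left,
    LinearEquiv.prodCongr_apply, map_zero, Submodule.coe_prodEquivOfIsCompl', Submodule.coe_zero,
    add_zero]
  exact LinearEquiv.ofInjective_apply ψ w

/-- Extend-by-zero linear map sending basis vector `i` to the standard basis vector `g i`. -/
def emap {r : ℕ} (g : Fin r → Fin m) : (Fin r → ZMod 2) →ₗ[ZMod 2] QS m where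
  toFun y := ∑ i, y i • Pi.single (g i) (1 : ZMod 2)
  map_add' y z := by simp [add_smul, Finset.sum_add_distrib]
  map_smul' c y := by simp [Finset.smul_sum, mul_smul]

lemma emap_apply_g {r : ℕ} {g : Fin r → Fin m} (hg : Function.Injective g)
    (y : Fin r → ZMod 2) (i₀ : Fin r) : emap g y (g i₀) = y i₀ := by
  simp only [emap, LinearMap.coe_mk, AddHom.coe_mk, Finset.sum_apply, Pi.smul_apply,
    smul_eq_mul, Pi.single_apply, hg.eq_iff, mul_ite, mul_one, mul_zero]
  simp [eq_comm]

lemma emap_apply_notin {r : ℕ} (g : Fin r → Fin m) (y : Fin r → ZMod 2) {j : Fin m}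
    (hj : ∀ i, g i ≠ j) : emap g y j = 0 := by
  simp only [emap, LinearMap.coe_mk, AddHom.coe_mk, Finset.sum_apply, Pi.smul_apply, smul_eq_mul]
  refine Finset.sum_eq_zero fun i _ => ?_
  rw [Pi.single_eq_of_ne (Ne.symm (hj i)), mul_zero]

lemma emap_injective {r : ℕ} {g : Fin r → Fin m} (hg : Function.Injective g) :
    Function.Injective (emap g) := by
  intro y z h
  funext i
  have := congrFun h (g i)
  rwa [emap_apply_g hg, emap_apply_g hg] at this

/-- Key lemma: a `k`-cycle is affinely conjugate to a permutation whose support is contained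
in the affine subspace `{x | ∀ j ∉ range h, x j = t j}`, for any injective `h : Fin k → Fin m`. -/
lemma key {m k : ℕ} (p : Equiv.Perm (QS m)) (hc : p.IsCycle) (hk : p.support.card = k)
    (h : Fin k → Fin m) (hinj : Function.Injective h) (t : QS m) :
    ∃ q : Equiv.Perm (QS m), AffEquiv p q ∧
      ∀ x : QS m, q x ≠ x → ∀ j : Fin m, (∀ i, h i ≠ j) → x j = t j := by
  classical
  obtain ⟨x₀, hx₀, -⟩ := hc
  set T : Finset (QS m) := p.support.image (· + x₀) with hT
  set W : Submodule (ZMod 2) (QS m) := Submodule.span (ZMod 2) (T : Set (QS m)) with hW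
  have hr : Module.finrank (ZMod 2) W ≤ k := by
    have h1 := finrank_span_finset_le_card (R := ZMod 2) T
    have h2 : T.card ≤ k := hk ▸ Finset.card_image_le
    unfold Set.finrank at h1
    exact le_trans h1 h2
  set r := Module.finrank (ZMod 2) W with hrdef
  set g : Fin r → Fin m := h ∘ Fin.castLE hr with hg
  have hginj : Function.Injective g := hinj.comp (Fin.castLE_injective hr)
  set b := Module.finBasis (ZMod 2) W
  set ψ : W →ₗ[ZMod 2] QS m := (emap g).comp b.equivFun.toLinearMap with hψdef
  have hψ : Function.Injective ψ :=
    (emap_injective hginj).comp b.equivFun.injective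
  obtain ⟨L, hL⟩ := exists_extend W ψ hψ
  set A : Equiv.Perm (QS m) :=
    ((Equiv.addRight x₀).trans L.toEquiv).trans (Equiv.addRight t) with hA
  have hAapp : ∀ x, A x = L (x + x₀) + t := fun x => rfl
  have hAaff : IsAffinePerm A := by
    refine ⟨L, L x₀ + t, fun x => ?_⟩
    rw [hAapp, map_add, add_assoc]
  refine ⟨A * p * A⁻¹, affEquiv_conj p hAaff, fun x hx j hj => ?_⟩
  have hy : p (A⁻¹ x) ≠ A⁻¹ x := by
    intro hfix
    apply hx
    show A (p (A⁻¹ x)) = x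
    rw [hfix, show A (A⁻¹ x) = x from (Equiv.eq_symm_apply A).mp rfl]
  set y : QS m := A⁻¹ x with hy'
  have hxy : x = A y := (show A (A⁻¹ x) = x from (Equiv.eq_symm_apply A).mp rfl).symm
  have hyW : y + x₀ ∈ W :=
    Submodule.subset_span (Finset.mem_coe.2 (Finset.mem_image_of_mem _
      (Equiv.Perm.mem_support.2 hy)))
  have : x j = (L (y + x₀)) j + t j := by rw [hxy, hAapp]; rfl
  rw [this, hL ⟨y + x₀, hyW⟩]
  have : ψ ⟨y + x₀, hyW⟩ j = 0 :=
    emap_apply_notin g _ (fun i => hj (Fin.castLE hr i))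
  rw [show ψ ⟨y + x₀, hyW⟩ = (ψ ⟨y + x₀, hyW⟩ : QS m) from rfl] at *
  rw [this, zero_add]

end FMCC

/-- for every k there are only finitely many affine equivalence
classes of permutations of F₂ᵐ that are a single k-cycle, uniformly in m; and
for m > k every such permutation is affine equivalent to a controlled
permutation (control on the first qubit). -/
theorem finitely_many_cycle_classes (k : ℕ) :
    (∃ N : ℕ, ∀ m : ℕ, ∃ S : Finset (Equiv.Perm (QS m)),
      S.card ≤ N ∧
      ∀ p : Equiv.Perm (QS m), p.IsCycle → p.support.card = k →
        ∃ q ∈ S, AffEquiv p q) ∧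
    (∀ (m : ℕ) (hm : k < m) (p : Equiv.Perm (QS m)),
      p.IsCycle → p.support.card = k →
      ∃ q : Equiv.Perm (QS m), AffEquiv p q ∧
        ∀ x : QS m,
          x ⟨0, Nat.lt_of_le_of_lt (Nat.zero_le k) hm⟩ = 0 → q x = x) := by
  constructor
  · refine ⟨max ((2 ^ k) ^ (2 ^ k)) (Nat.factorial (2 ^ k)), fun m => ?_⟩
    classical
    by_cases hkm : k ≤ m
    · set S : Finset (Equiv.Perm (QS m)) :=
        Finset.univ.filter
          (fun q => ∀ x : QS m, (¬ ∀ j : Fin m, k ≤ j.val → x j = 0) → q x = x) with hS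
      have hSmem : ∀ q ∈ S, ∀ x : QS m, (¬ ∀ j : Fin m, k ≤ j.val → x j = 0) → q x = x := by
        intro q hq
        simpa [hS, Finset.mem_filter] using hq
      refine ⟨S, ?_, ?_⟩
      · refine le_trans ?_ (le_max_left _ _)
        set Vs := {x : QS m // ∀ j : Fin m, k ≤ j.val → x j = 0} with hVs
        have hcV : Fintype.card Vs ≤ 2 ^ k := by
          have hinj : Function.Injective (fun v : Vs => (fun i : Fin k =>
              if h : (i : ℕ) < m then v.val ⟨i, h⟩ else 0 : Fin k → ZMod 2)) := by
            intro v w hvw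
            apply Subtype.ext; funext j
            by_cases hj : (j : ℕ) < k
            · have := congrFun hvw ⟨j, hj⟩
              simpa [j.isLt] using this
            · rw [v.2 j (le_of_not_gt hj), w.2 j (le_of_not_gt hj)]
          calc Fintype.card Vs ≤ Fintype.card (Fin k → ZMod 2) :=
                Fintype.card_le_of_injective _ hinj
            _ = 2 ^ k := by simp
        have hmaps : ∀ q ∈ S, ∀ v : Vs, (∀ j : Fin m, k ≤ j.val → q v.val j = 0) := by
          intro q hq v
          by_contra hbad
          have hfix : q (q v.val) = q v.val := hSmem q hq _ hbad
          have hv : q v.val = v.val := q.injective hfix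
          exact hbad (fun j hj => by rw [hv]; exact v.2 j hj)
        set F : Equiv.Perm (QS m) → (Vs → Vs) := fun q v =>
          if h : ∀ j : Fin m, k ≤ j.val → q v.val j = 0 then ⟨q v.val, h⟩ else v with hF
        have hinjF : Set.InjOn F S := by
          intro q1 h1 q2 h2 he
          have h1' := Finset.mem_coe.1 h1
          have h2' := Finset.mem_coe.1 h2
          refine Equiv.ext fun x => ?_
          by_cases hx : ∀ j : Fin m, k ≤ j.val → x j = 0
          · have := congrFun he ⟨x, hx⟩
            rw [show F q1 ⟨x, hx⟩ = ⟨q1 x, hmaps q1 h1' ⟨x, hx⟩⟩ from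
                dif_pos (hmaps q1 h1' ⟨x, hx⟩),
              show F q2 ⟨x, hx⟩ = ⟨q2 x, hmaps q2 h2' ⟨x, hx⟩⟩ from
                dif_pos (hmaps q2 h2' ⟨x, hx⟩)] at this
            exact congrArg Subtype.val this
          · rw [hSmem q1 h1' x hx, hSmem q2 h2' x hx]
        calc S.card ≤ (Finset.univ : Finset (Vs → Vs)).card :=
              Finset.card_le_card_of_injOn F (fun _ _ => Finset.mem_univ _) hinjF
          _ = Fintype.card Vs ^ Fintype.card Vs := by rw [Finset.card_univ, Fintype.card_fun]
          _ ≤ (2 ^ k) ^ Fintype.card Vs := Nat.pow_le_pow_left hcV _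
          _ ≤ (2 ^ k) ^ (2 ^ k) := Nat.pow_le_pow_right Nat.one_le_two_pow hcV
      · intro p hc hk
        obtain ⟨q, hq, hsupp⟩ := FMCC.key p hc hk (Fin.castLE hkm) (Fin.castLE_injective hkm) 0
        refine ⟨q, ?_, hq⟩
        simp only [hS, Finset.mem_filter, Finset.mem_univ, true_and]
        intro x hx
        by_contra hne
        apply hx
        intro j hj
        have := hsupp x hne j (fun i hi => by
          have := congrArg Fin.val hi
          simp only [Fin.coe_castLE] at this
          omega)
        simpa using this
    · refine ⟨Finset.univ, ?_, fun p hc hk => ⟨p, Finset.mem_univ _, FMCC.affEquiv_refl p⟩⟩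
      refine le_trans ?_ (le_max_right _ _)
      rw [Finset.card_univ, Fintype.card_perm]
      refine Nat.factorial_le ?_
      rw [show Fintype.card (QS m) = 2 ^ m by simp]
      exact Nat.pow_le_pow_right (by norm_num) (le_of_not_ge hkm)
  · intro m hm p hc hk
    set j0 : Fin m := ⟨0, Nat.lt_of_le_of_lt (Nat.zero_le k) hm⟩ with hj0
    obtain ⟨q, hq, hsupp⟩ := FMCC.key p hc hk
      (fun i => ⟨i.val + 1, by omega⟩)
      (fun a b hab => by
        have := congrArg Fin.val hab
        simp only at this
        exact Fin.ext (by omega))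
      (Pi.single j0 1)
    refine ⟨q, hq, fun x hx0 => ?_⟩
    by_contra hne
    have := hsupp x hne j0 (fun i hi => by
      have := congrArg Fin.val hi
      simp [hj0] at this)
    rw [hx0] at this
    simp [Pi.single_eq_same] at this
end
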